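/- Let k be a commutative ring, G a group, V = V₀ ⊕ V₁ a ℤ/2ℤ-graded k-module, γ : G × G → kˣ, ξ : G → ℤ/2ℤ a group homomorphism, and ρ_V : G → GL(V) a projective representation with multiplier γ such that ρ_V(g)(V_i) ⊆ V_{i+ξ(g)} for all g ∈ G and i ∈ ℤ/2ℤ. Let ρ(g) : V ⊗_k V → V ⊗_k V be the k-linear map determined by ρ(g)(u ⊗ v) = (−1)^{ξ(g)·j}·(ρ_V(g)u) ⊗ (ρ_V(g)v) for u ∈ V and homogeneous v ∈ V_j, and let τ : V ⊗_k V → V ⊗_k V be the signed transposition determined by τ(u ⊗ v) = (−1)^{i·j}·v ⊗ u for homogeneous u ∈ V_i and v ∈ V_j. Then ρ(g) ∘ τ = (−1)^{ξ(g)}·(τ ∘ ρ(g)) for all g ∈ G. -/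

import Mathlib

open scoped TensorProduct

lemma stmt_18_sign {k : Type*} [CommRing k] (i j e : ZMod 2) :
    (-1 : k) ^ (i * j).val * (-1 : k) ^ ((e * i).val) =
      (-1 : k) ^ e.val * ((-1 : k) ^ ((e * j).val) *
        (-1 : k) ^ (((i + e) * (j + e)).val)) := by
  fin_cases i <;> fin_cases j <;> fin_cases e <;> simp (config := {decide := true}) [ZMod.val]

/-- For a super projective representation `ρ_V` of `G` with multiplier `γ` shifting the
ℤ/2ℤ-grading by the homomorphism `ξ`, the induced map `ρ(g)` on `V ⊗ V` (with the Koszul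
sign `(−1)^{ξ(g)·j}`) commutes with the signed transposition `τ` up to the sign
`(−1)^{ξ(g)}`: `ρ(g) ∘ τ = (−1)^{ξ(g)}·(τ ∘ ρ(g))`. -/
theorem stmt_18 {k : Type*} [CommRing k] {G : Type*} [Group G]
    {V : Type*} [AddCommGroup V] [Module k V]
    (𝒱 : ZMod 2 → Submodule k V)
    (hV : DirectSum.IsInternal 𝒱)
    (γ : G → G → kˣ) (ξ : G → ZMod 2)
    (hξ : ∀ f g : G, ξ (f * g) = ξ f + ξ g)
    (ρV : G → LinearMap.GeneralLinearGroup k V)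
    (hρV : ∀ f g : G, (ρV f : V →ₗ[k] V) ∘ₗ (ρV g : V →ₗ[k] V) =
      (γ f g : k) • (ρV (f * g) : V →ₗ[k] V))
    (hgrV : ∀ (g : G) (i : ZMod 2), ∀ v ∈ 𝒱 i, (ρV g : V →ₗ[k] V) v ∈ 𝒱 (i + ξ g))
    (ρ : G → (V ⊗[k] V →ₗ[k] V ⊗[k] V))
    (hρ : ∀ (g : G) (u : V) (j : ZMod 2), ∀ v ∈ 𝒱 j,
      ρ g (u ⊗ₜ[k] v) =
        ((-1 : k) ^ (ξ g * j).val) •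
          (((ρV g : V →ₗ[k] V) u) ⊗ₜ[k] ((ρV g : V →ₗ[k] V) v)))
    (τ : V ⊗[k] V →ₗ[k] V ⊗[k] V)
    (hτ : ∀ (i j : ZMod 2), ∀ u ∈ 𝒱 i, ∀ v ∈ 𝒱 j,
      τ (u ⊗ₜ[k] v) = ((-1 : k) ^ (i * j).val) • (v ⊗ₜ[k] u)) :
    ∀ g : G, (ρ g) ∘ₗ τ = ((-1 : k) ^ (ξ g).val) • (τ ∘ₗ (ρ g)) := by
  intro g
  have htop : (⨆ i, 𝒱 i) = ⊤ := hV.submodule_iSup_eq_top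
  -- key computation on homogeneous elements
  have key : ∀ (i j : ZMod 2), ∀ u ∈ 𝒱 i, ∀ v ∈ 𝒱 j,
      ρ g (τ (u ⊗ₜ[k] v)) = ((-1 : k) ^ (ξ g).val) • τ (ρ g (u ⊗ₜ[k] v)) := by
    intro i j u hu v hv
    rw [hτ i j u hu v hv, map_smul, hρ g v i u hu, hρ g u j v hv, map_smul,
      hτ (i + ξ g) (j + ξ g) _ (hgrV g i u hu) _ (hgrV g j v hv)]
    rw [smul_smul, smul_smul, smul_smul]
    congr 1
    have := stmt_18_sign (k := k) i j (ξ g)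
    calc (-1 : k) ^ (i * j).val * (-1 : k) ^ ((ξ g * i).val)
        = (-1 : k) ^ (ξ g).val * ((-1 : k) ^ ((ξ g * j).val) *
            (-1 : k) ^ (((i + ξ g) * (j + ξ g)).val)) := this
      _ = _ := by ring
  -- extend by linearity
  apply TensorProduct.ext'
  intro u v
  have hu : u ∈ ⨆ i, 𝒱 i := htop ▸ Submodule.mem_top
  have hv : v ∈ ⨆ i, 𝒱 i := htop ▸ Submodule.mem_top
  simp only [LinearMap.comp_apply, LinearMap.smul_apply]
  refine Submodule.iSup_induction 𝒱 (motive := fun u' =>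
    ρ g (τ (u' ⊗ₜ[k] v)) = ((-1 : k) ^ (ξ g).val) • τ (ρ g (u' ⊗ₜ[k] v))) hu ?_ ?_ ?_
  · intro i u' hu'
    refine Submodule.iSup_induction 𝒱 (motive := fun v' =>
      ρ g (τ (u' ⊗ₜ[k] v')) = ((-1 : k) ^ (ξ g).val) • τ (ρ g (u' ⊗ₜ[k] v'))) hv ?_ ?_ ?_
    · intro j v' hv'
      exact key i j u' hu' v' hv'
    · simp
    · intro x y hx hy
      simp only [TensorProduct.tmul_add, map_add, hx, hy, smul_add]
  · simp
  · intro x y hx hy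
    simp only [TensorProduct.add_tmul, map_add, hx, hy, smul_add]
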